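/- Suppose b_k = o(k^r) for some r > 0, and let δ̂_n = n^{-(r+2)/(2(r+1))}. Then ∑_{k=n+1}^∞ k b_k e^{-k δ̂_n}/(1 - e^{-k δ̂_n}) → 0 as n → ∞. -/

import Mathlib

open Real Filter Asymptotics

set_option maxHeartbeats 1000000

/-- For `t ≥ 0`, `t^m * exp (-t) ≤ m!`. -/
lemma aux_pow_mul_exp_neg_le (m : ℕ) {t : ℝ} (ht : 0 ≤ t) :
    t ^ m * Real.exp (-t) ≤ (m.factorial : ℝ) := by
  have h := Real.pow_div_factorial_le_exp _ ht m
  rw [div_le_iff₀ (by positivity)] at h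
  rw [Real.exp_neg, ← div_eq_mul_inv, div_le_iff₀ (Real.exp_pos t)]
  nlinarith [Real.exp_pos t]

/-- For `0 < δ ≤ 1`, `δ/4 ≤ 1 - exp (-(δ/2))`. -/
lemma aux_one_sub_exp (δ : ℝ) (h0 : 0 < δ) (h1 : δ ≤ 1) :
    δ / 4 ≤ 1 - Real.exp (-(δ / 2)) := by
  have h2 : (1 : ℝ) + δ / 2 ≤ Real.exp (δ / 2) := by
    have := Real.add_one_le_exp (δ / 2); linarith
  have h3 : Real.exp (-(δ / 2)) ≤ (1 + δ / 2)⁻¹ := by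
    rw [Real.exp_neg]
    exact inv_anti₀ (by linarith) h2
  have h4 : (1 + δ / 2)⁻¹ ≤ 1 - δ / 4 := by
    rw [inv_le_iff_one_le_mul₀ (by linarith)]
    nlinarith
  linarith

/-- Tail estimate (eng): if b_k = o(k^r) and δ̂_n = n^{-(r+2)/(2(r+1))}, then
∑_{k=n+1}^∞ k b_k e^{-kδ̂_n}/(1 - e^{-kδ̂_n}) → 0 as n → ∞. -/
theorem tail_sum_tendsto_zero (b : ℕ → ℝ) (hb : ∀ k, 0 ≤ b k) (r : ℝ) (hr : 0 < r)
    (ho : (fun k : ℕ => b k) =o[atTop] fun k : ℕ => (k : ℝ) ^ r) :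
    Tendsto (fun n : ℕ =>
        ∑' j : ℕ, ((j + n + 1 : ℕ) : ℝ) * b (j + n + 1)
            * Real.exp (-((j + n + 1 : ℕ) : ℝ) * (n : ℝ) ^ (-(r + 2) / (2 * (r + 1))))
            / (1 - Real.exp (-((j + n + 1 : ℕ) : ℝ) * (n : ℝ) ^ (-(r + 2) / (2 * (r + 1))))))
      atTop (nhds 0) := by
  -- the o(·) hypothesis gives an eventual bound b k ≤ k^r
  obtain ⟨N, hN⟩ : ∃ N : ℕ, ∀ k ≥ N, b k ≤ (k : ℝ) ^ r := by
    have h := ho.def one_pos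
    rw [eventually_atTop] at h
    obtain ⟨N, hN⟩ := h
    refine ⟨N, fun k hk => ?_⟩
    have := hN k hk
    simp only [norm_eq_abs, one_mul] at this
    calc b k ≤ |b k| := le_abs_self _
      _ ≤ |(k : ℝ) ^ r| := this
      _ = (k : ℝ) ^ r := abs_of_nonneg (Real.rpow_nonneg (Nat.cast_nonneg k) r)
  set a : ℝ := (r + 2) / (2 * (r + 1)) with ha_def
  have h2r : (0 : ℝ) < 2 * (r + 1) := by positivity
  have ha0 : 0 < a := by positivity
  have ha1 : a < 1 := by rw [ha_def, div_lt_one h2r]; linarith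
  have hca : 0 < 1 - a := by linarith
  have hexp_eq : -(r + 2) / (2 * (r + 1)) = -a := by rw [ha_def, neg_div]
  set m : ℕ := ⌈r + 1⌉₊ with hm_def
  have hrm : r + 1 ≤ (m : ℝ) := Nat.le_ceil _
  set B : ℕ → ℝ := fun n =>
    8 * (m.factorial : ℝ) * 2 ^ m * ((n : ℝ) ^ a) ^ (m + 1) * Real.exp (-(n : ℝ) ^ (1 - a) / 2)
    with hB_def
  -- B tends to 0
  have hB0 : Tendsto B atTop (nhds 0) := by
    have h1 : Tendsto (fun n : ℕ => (n : ℝ) ^ (1 - a)) atTop atTop :=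
      (tendsto_rpow_atTop hca).comp tendsto_natCast_atTop_atTop
    have h2 : Tendsto (fun y : ℝ => y ^ (a * (m + 1) / (1 - a)) * Real.exp (-(1 / 2) * y))
        atTop (nhds 0) :=
      tendsto_rpow_mul_exp_neg_mul_atTop_nhds_zero _ _ (by norm_num)
    have h3 : Tendsto (fun n : ℕ =>
        8 * (m.factorial : ℝ) * 2 ^ m *
          (((n : ℝ) ^ (1 - a)) ^ (a * (m + 1) / (1 - a)) *
            Real.exp (-(1 / 2) * (n : ℝ) ^ (1 - a)))) atTop (nhds (8 * (m.factorial : ℝ) * 2 ^ m * 0)) :=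
      tendsto_const_nhds.mul (h2.comp h1)
    rw [mul_zero] at h3
    refine h3.congr' ?_
    filter_upwards [eventually_ge_atTop 1] with n hn
    have hn0 : (0 : ℝ) < (n : ℝ) := by exact_mod_cast hn
    have e1 : ((n : ℝ) ^ (1 - a)) ^ (a * (m + 1) / (1 - a)) = ((n : ℝ) ^ a) ^ (m + 1) := by
      rw [← Real.rpow_natCast ((n : ℝ) ^ a) (m + 1), ← Real.rpow_mul hn0.le,
        ← Real.rpow_mul hn0.le]
      congr 1
      push_cast
      field_simp
    have e2 : Real.exp (-(1 / 2) * (n : ℝ) ^ (1 - a)) = Real.exp (-(n : ℝ) ^ (1 - a) / 2) := by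
      ring_nf
    simp only [hB_def]
    rw [e1, e2]
    ring
  -- squeeze
  refine squeeze_zero' ?_ ?_ hB0
  · filter_upwards with n
    refine tsum_nonneg fun j => ?_
    refine div_nonneg (mul_nonneg (mul_nonneg (Nat.cast_nonneg _) (hb _)) (Real.exp_nonneg _)) ?_
    rw [sub_nonneg, Real.exp_le_one_iff]
    have : (0:ℝ) ≤ (n : ℝ) ^ (-(r + 2) / (2 * (r + 1))) := Real.rpow_nonneg (Nat.cast_nonneg n) _
    nlinarith [Nat.cast_nonneg (j + n + 1) (α := ℝ)]
  · filter_upwards [eventually_ge_atTop N, eventually_ge_atTop 1] with n hnN hn1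
    have hn0 : (0 : ℝ) < (n : ℝ) := by exact_mod_cast hn1
    have hn1' : (1 : ℝ) ≤ (n : ℝ) := by exact_mod_cast hn1
    set δ : ℝ := (n : ℝ) ^ (-a) with hδ_def
    have hδ0 : 0 < δ := Real.rpow_pos_of_pos hn0 _
    have hδ1 : δ ≤ 1 := Real.rpow_le_one_of_one_le_of_nonpos hn1' (by linarith)
    have hnδ : 1 ≤ (n : ℝ) * δ := by
      have : (n : ℝ) * δ = (n : ℝ) ^ (1 - a) := by
        rw [hδ_def, show (1 : ℝ) - a = 1 + -a by ring, Real.rpow_add hn0, Real.rpow_one]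
      rw [this]
      exact Real.one_le_rpow hn1' hca.le
    -- termwise bound
    have key : ∀ j : ℕ,
        ((j + n + 1 : ℕ) : ℝ) * b (j + n + 1)
            * Real.exp (-((j + n + 1 : ℕ) : ℝ) * (n : ℝ) ^ (-(r + 2) / (2 * (r + 1))))
            / (1 - Real.exp (-((j + n + 1 : ℕ) : ℝ) * (n : ℝ) ^ (-(r + 2) / (2 * (r + 1)))))
          ≤ (2 * (m.factorial : ℝ) * (2 / δ) ^ m * Real.exp (-(((n : ℝ) + 1) * δ) / 2))
              * Real.exp (-(δ / 2)) ^ j := by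
      intro j
      set k : ℕ := j + n + 1 with hk_def
      have hk1 : (1 : ℝ) ≤ (k : ℝ) := by exact_mod_cast Nat.one_le_iff_ne_zero.2 (by omega)
      have hk0 : (0 : ℝ) < (k : ℝ) := by linarith
      have hkn : (n : ℝ) + 1 + (j:ℝ) ≤ (k : ℝ) := by
        rw [hk_def]; push_cast; linarith
      have hkδ : 1 ≤ (k : ℝ) * δ := le_trans hnδ (by nlinarith)
      rw [hexp_eq, ← hδ_def]
      have hden : (1:ℝ) / 2 ≤ 1 - Real.exp (-(k : ℝ) * δ) := by
        have : Real.exp (-(k : ℝ) * δ) ≤ Real.exp (-1) := by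
          apply Real.exp_le_exp.2; nlinarith
        have he1 : Real.exp (-1 : ℝ) ≤ 1/2 := by
          rw [Real.exp_neg]
          rw [inv_le_iff_one_le_mul₀ (Real.exp_pos 1)]
          nlinarith [Real.add_one_le_exp (1:ℝ)]
        linarith
      have hnum : 0 ≤ (k : ℝ) * b k * Real.exp (-(k : ℝ) * δ) :=
        mul_nonneg (mul_nonneg hk0.le (hb k)) (Real.exp_nonneg _)
      calc (k : ℝ) * b k * Real.exp (-(k : ℝ) * δ) / (1 - Real.exp (-(k : ℝ) * δ))
          ≤ (k : ℝ) * b k * Real.exp (-(k : ℝ) * δ) / (1/2) := by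
            apply div_le_div_of_nonneg_left hnum (by norm_num) hden
        _ = 2 * ((k : ℝ) * b k) * Real.exp (-(k : ℝ) * δ) := by ring
        _ ≤ 2 * ((k : ℝ) * (k : ℝ) ^ r) * Real.exp (-(k : ℝ) * δ) := by
            have hbk : b k ≤ (k : ℝ) ^ r := hN k (by omega)
            gcongr
        _ = 2 * (k : ℝ) ^ (r + 1) * Real.exp (-(k : ℝ) * δ) := by
            rw [Real.rpow_add_one (by positivity)]; ring
        _ ≤ 2 * (k : ℝ) ^ (m : ℝ) * Real.exp (-(k : ℝ) * δ) := by
            have := Real.rpow_le_rpow_of_exponent_le hk1 hrm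
            have := Real.exp_pos (-(k : ℝ) * δ)
            nlinarith
        _ = 2 * ((k : ℝ) ^ m * Real.exp (-((k : ℝ) * δ / 2))) * Real.exp (-((k : ℝ) * δ / 2)) := by
            have hesplit : Real.exp (-(k : ℝ) * δ)
                = Real.exp (-((k : ℝ) * δ / 2)) * Real.exp (-((k : ℝ) * δ / 2)) := by
              rw [← Real.exp_add]
              ring_nf
            rw [Real.rpow_natCast, hesplit]
            ring
        _ ≤ 2 * ((m.factorial : ℝ) * (2 / δ) ^ m) * Real.exp (-((k : ℝ) * δ / 2)) := by
            have haux : ((k : ℝ) * δ / 2) ^ m * Real.exp (-((k : ℝ) * δ / 2)) ≤ (m.factorial : ℝ) :=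
              aux_pow_mul_exp_neg_le m
                (div_nonneg (mul_nonneg hk0.le hδ0.le) (by norm_num))
            have hkm : (k : ℝ) ^ m * Real.exp (-((k : ℝ) * δ / 2)) ≤ (m.factorial : ℝ) * (2 / δ) ^ m := by
              have hδne : δ ≠ 0 := ne_of_gt hδ0
              have e3 : (k : ℝ) ^ m = ((k : ℝ) * δ / 2) ^ m * (2 / δ) ^ m := by
                rw [← mul_pow]
                congr 1
                field_simp
              rw [e3]
              calc ((k : ℝ) * δ / 2) ^ m * (2 / δ) ^ m * Real.exp (-((k : ℝ) * δ / 2))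
                  = ((k : ℝ) * δ / 2) ^ m * Real.exp (-((k : ℝ) * δ / 2)) * (2 / δ) ^ m := by ring
                _ ≤ (m.factorial : ℝ) * (2 / δ) ^ m := by
                    apply mul_le_mul_of_nonneg_right haux (by positivity)
            have := Real.exp_pos (-((k : ℝ) * δ / 2))
            nlinarith
        _ ≤ (2 * (m.factorial : ℝ) * (2 / δ) ^ m * Real.exp (-(((n : ℝ) + 1) * δ) / 2))
              * Real.exp (-(δ / 2)) ^ j := by
            have hesum : Real.exp (-(((n : ℝ) + 1) * δ) / 2) * Real.exp (-(δ / 2)) ^ j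
                = Real.exp (-(((n : ℝ) + 1) * δ) / 2 + (j : ℝ) * -(δ / 2)) := by
              rw [← Real.exp_nat_mul, ← Real.exp_add]
            have hee : Real.exp (-((k : ℝ) * δ / 2))
                ≤ Real.exp (-(((n : ℝ) + 1) * δ) / 2 + (j : ℝ) * -(δ / 2)) := by
              apply Real.exp_le_exp.2
              nlinarith [hkn, hδ0.le]
            calc 2 * ((m.factorial : ℝ) * (2 / δ) ^ m) * Real.exp (-((k : ℝ) * δ / 2))
                ≤ 2 * ((m.factorial : ℝ) * (2 / δ) ^ m)
                    * Real.exp (-(((n : ℝ) + 1) * δ) / 2 + (j : ℝ) * -(δ / 2)) :=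
                  mul_le_mul_of_nonneg_left hee (by positivity)
              _ = (2 * (m.factorial : ℝ) * (2 / δ) ^ m * Real.exp (-(((n : ℝ) + 1) * δ) / 2))
                    * Real.exp (-(δ / 2)) ^ j := by rw [← hesum]; ring
    -- sum the geometric bound
    have hgeo : Real.exp (-(δ / 2)) < 1 := Real.exp_lt_one_iff.2 (by linarith)
    have hgeo0 : 0 ≤ Real.exp (-(δ / 2)) := (Real.exp_pos _).le
    have hg_sum : Summable (fun j : ℕ =>
        (2 * (m.factorial : ℝ) * (2 / δ) ^ m * Real.exp (-(((n : ℝ) + 1) * δ) / 2))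
          * Real.exp (-(δ / 2)) ^ j) :=
      (summable_geometric_of_lt_one hgeo0 hgeo).mul_left _
    have hf_nonneg : ∀ j : ℕ, 0 ≤ ((j + n + 1 : ℕ) : ℝ) * b (j + n + 1)
            * Real.exp (-((j + n + 1 : ℕ) : ℝ) * (n : ℝ) ^ (-(r + 2) / (2 * (r + 1))))
            / (1 - Real.exp (-((j + n + 1 : ℕ) : ℝ) * (n : ℝ) ^ (-(r + 2) / (2 * (r + 1))))) := by
      intro j
      refine div_nonneg (mul_nonneg (mul_nonneg (Nat.cast_nonneg _) (hb _)) (Real.exp_nonneg _)) ?_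
      rw [sub_nonneg, Real.exp_le_one_iff]
      have : (0:ℝ) ≤ (n : ℝ) ^ (-(r + 2) / (2 * (r + 1))) := Real.rpow_nonneg (Nat.cast_nonneg n) _
      nlinarith [Nat.cast_nonneg (j + n + 1) (α := ℝ)]
    have hf_sum : Summable (fun j : ℕ => ((j + n + 1 : ℕ) : ℝ) * b (j + n + 1)
            * Real.exp (-((j + n + 1 : ℕ) : ℝ) * (n : ℝ) ^ (-(r + 2) / (2 * (r + 1))))
            / (1 - Real.exp (-((j + n + 1 : ℕ) : ℝ) * (n : ℝ) ^ (-(r + 2) / (2 * (r + 1)))))) :=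
      Summable.of_nonneg_of_le hf_nonneg key hg_sum
    calc (∑' j : ℕ, ((j + n + 1 : ℕ) : ℝ) * b (j + n + 1)
            * Real.exp (-((j + n + 1 : ℕ) : ℝ) * (n : ℝ) ^ (-(r + 2) / (2 * (r + 1))))
            / (1 - Real.exp (-((j + n + 1 : ℕ) : ℝ) * (n : ℝ) ^ (-(r + 2) / (2 * (r + 1))))))
        ≤ ∑' j : ℕ, (2 * (m.factorial : ℝ) * (2 / δ) ^ m * Real.exp (-(((n : ℝ) + 1) * δ) / 2))
              * Real.exp (-(δ / 2)) ^ j := Summable.tsum_le_tsum key hf_sum hg_sum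
      _ = (2 * (m.factorial : ℝ) * (2 / δ) ^ m * Real.exp (-(((n : ℝ) + 1) * δ) / 2))
            * (1 - Real.exp (-(δ / 2)))⁻¹ := by
          rw [tsum_mul_left, tsum_geometric_of_lt_one hgeo0 hgeo]
      _ ≤ B n := by
          have h14 : δ / 4 ≤ 1 - Real.exp (-(δ / 2)) := aux_one_sub_exp δ hδ0 hδ1
          have hinv : (1 - Real.exp (-(δ / 2)))⁻¹ ≤ 4 / δ := by
            rw [div_eq_mul_inv, ← inv_div]
            exact inv_anti₀ (by positivity) h14
          have hC0 : 0 ≤ 2 * (m.factorial : ℝ) * (2 / δ) ^ m * Real.exp (-(((n : ℝ) + 1) * δ) / 2) := by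
            positivity
          have step1 : (2 * (m.factorial : ℝ) * (2 / δ) ^ m * Real.exp (-(((n : ℝ) + 1) * δ) / 2))
              * (1 - Real.exp (-(δ / 2)))⁻¹
              ≤ (2 * (m.factorial : ℝ) * (2 / δ) ^ m * Real.exp (-(((n : ℝ) + 1) * δ) / 2)) * (4 / δ) :=
            mul_le_mul_of_nonneg_left hinv hC0
          have hexp2 : Real.exp (-(((n : ℝ) + 1) * δ) / 2) ≤ Real.exp (-(n : ℝ) ^ (1 - a) / 2) := by
            apply Real.exp_le_exp.2
            have hnδeq : (n : ℝ) * δ = (n : ℝ) ^ (1 - a) := by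
              rw [hδ_def, show (1 : ℝ) - a = 1 + -a by ring, Real.rpow_add hn0, Real.rpow_one]
            nlinarith
          have hδinv : δ⁻¹ = (n : ℝ) ^ a := by
            rw [hδ_def, Real.rpow_neg hn0.le, inv_inv]
          have step2 : (2 * (m.factorial : ℝ) * (2 / δ) ^ m * Real.exp (-(((n : ℝ) + 1) * δ) / 2)) * (4 / δ)
              ≤ B n := by
            rw [hB_def]
            have e4 : (2 * (m.factorial : ℝ) * (2 / δ) ^ m) * (4 / δ)
                = 8 * (m.factorial : ℝ) * 2 ^ m * ((n : ℝ) ^ a) ^ (m + 1) := by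
              rw [← hδinv, div_pow, div_eq_mul_inv (4:ℝ), pow_succ]
              field_simp
              rw [one_div, inv_pow, mul_right_comm, mul_inv_cancel₀ (pow_ne_zero _ hδ0.ne')]
              norm_num
            calc (2 * (m.factorial : ℝ) * (2 / δ) ^ m * Real.exp (-(((n : ℝ) + 1) * δ) / 2)) * (4 / δ)
                = ((2 * (m.factorial : ℝ) * (2 / δ) ^ m) * (4 / δ))
                    * Real.exp (-(((n : ℝ) + 1) * δ) / 2) := by ring
              _ ≤ ((2 * (m.factorial : ℝ) * (2 / δ) ^ m) * (4 / δ))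
                    * Real.exp (-(n : ℝ) ^ (1 - a) / 2) := by
                  apply mul_le_mul_of_nonneg_left hexp2 (by positivity)
              _ = 8 * (m.factorial : ℝ) * 2 ^ m * ((n : ℝ) ^ a) ^ (m + 1)
                    * Real.exp (-(n : ℝ) ^ (1 - a) / 2) := by rw [e4]
          linarith
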